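/- Let E be a real inner product space and let f⁰, f¹ : E → ℝ both be L-smooth for some L ≥ 0. Fix ω ∈ E with ∇₀ := ‖∇f⁰(ω)‖ > 0 and ∇₁ := ‖∇f¹(ω)‖ > 0, set c = ⟨∇f⁰(ω), ∇f¹(ω)⟩, cos θ = c/(∇₀∇₁), S = ‖∇f⁰(ω) + ∇f¹(ω)‖², and assume S > 0. Let η > 0 satisfy ηL ≤ 2(min(∇₀², ∇₁²) + c)/S, let n₀, n₁ > 0 be the class sizes with ratio R = n₀/n₁, let r = ∇₀/∇₁, and set ω' = ω − η(∇f⁰(ω) + ∇f¹(ω)). Then the speed gap Δ := (f⁰(ω) − f⁰(ω'))/n₀ − (f¹(ω) − f¹(ω'))/n₁ satisfies Δ ≥ (η∇₁²/n₀)·((r − R·cos θ)² − (R + 1)²). -/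

import Mathlib

open RealInnerProductSpace

/-- Descent lemma: a function with `L`-Lipschitz gradient satisfies the quadratic bound
`|f (x + v) - f x - ⟪∇f x, v⟫| ≤ (L/2)‖v‖²`. -/
lemma descent_lemma {E : Type*} [NormedAddCommGroup E]
    [InnerProductSpace ℝ E] [CompleteSpace E]
    (f : E → ℝ) (hf : Differentiable ℝ f) (L : ℝ) (hL : 0 ≤ L)
    (hlip : ∀ x y : E, ‖gradient f x - gradient f y‖ ≤ L * ‖x - y‖)
    (x v : E) :
    |f (x + v) - f x - ⟪gradient f x, v⟫| ≤ L / 2 * ‖v‖ ^ 2 := by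
  -- the gradient is continuous
  have hgradcont : Continuous (gradient f) := by
    have : LipschitzWith L.toNNReal (gradient f) := by
      apply LipschitzWith.of_dist_le_mul
      intro a b
      rw [dist_eq_norm, dist_eq_norm]
      calc ‖gradient f a - gradient f b‖ ≤ L * ‖a - b‖ := hlip a b
        _ = (L.toNNReal : ℝ) * ‖a - b‖ := by rw [Real.coe_toNNReal L hL]
    exact this.continuous
  -- the derivative of t ↦ f (x + t • v)
  have key : ∀ t : ℝ, HasDerivAt (fun t : ℝ => f (x + t • v))
      ⟪gradient f (x + t • v), v⟫ t := by
    intro t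
    have hline : HasDerivAt (fun t : ℝ => x + t • v) v t := by
      simpa using ((hasDerivAt_id t).smul_const v).const_add x
    have hfd := ((hf (x + t • v)).hasGradientAt).hasFDerivAt
    have := hfd.comp_hasDerivAt t hline
    simpa [InnerProductSpace.toDual_apply_apply, Function.comp_def] using this
  have hcont : Continuous fun t : ℝ => ⟪gradient f (x + t • v), v⟫ := by
    exact (Continuous.inner (hgradcont.comp (by continuity)) continuous_const)
  have hint : f (x + v) - f x = ∫ t in (0:ℝ)..1, ⟪gradient f (x + t • v), v⟫ := by
    have := intervalIntegral.integral_eq_sub_of_hasDerivAt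
      (f := fun t : ℝ => f (x + t • v)) (a := (0:ℝ)) (b := 1)
      (fun t _ => key t) (hcont.intervalIntegrable 0 1)
    simpa using this.symm
  have hconst : ⟪gradient f x, v⟫ = ∫ t in (0:ℝ)..1, ⟪gradient f x, v⟫ := by simp
  have hdiff : f (x + v) - f x - ⟪gradient f x, v⟫
      = ∫ t in (0:ℝ)..1, ⟪gradient f (x + t • v) - gradient f x, v⟫ := by
    simp only [inner_sub_left]
    rw [hint, intervalIntegral.integral_sub (hcont.intervalIntegrable 0 1)
      intervalIntegrable_const]
    simp
  rw [hdiff]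
  have hbound : ∀ t ∈ Set.Ioc (0:ℝ) 1,
      |⟪gradient f (x + t • v) - gradient f x, v⟫| ≤ L * ‖v‖ ^ 2 * t := by
    intro t ht
    calc |⟪gradient f (x + t • v) - gradient f x, v⟫|
        ≤ ‖gradient f (x + t • v) - gradient f x‖ * ‖v‖ := abs_real_inner_le_norm _ _
      _ ≤ (L * ‖x + t • v - x‖) * ‖v‖ := by
          gcongr; exact hlip _ _
      _ = L * ‖v‖ ^ 2 * t := by
          have : x + t • v - x = t • v := by abel
          rw [this, norm_smul, Real.norm_eq_abs, abs_of_pos ht.1]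
          ring
  have hI : (∫ t in (0:ℝ)..1, L * ‖v‖ ^ 2 * t) = L / 2 * ‖v‖ ^ 2 := by
    rw [intervalIntegral.integral_const_mul, integral_id]
    ring
  have hmain : ‖∫ t in (0:ℝ)..1, ⟪gradient f (x + t • v) - gradient f x, v⟫‖ ≤
      |∫ t in (0:ℝ)..1, L * ‖v‖ ^ 2 * t| := by
    apply intervalIntegral.norm_integral_le_abs_of_norm_le
    · filter_upwards [MeasureTheory.ae_restrict_mem measurableSet_Ioc] with t ht
      rw [Set.uIoc_of_le (by norm_num : (0:ℝ) ≤ 1)] at ht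
      simpa [Real.norm_eq_abs] using hbound t ht
    · exact (Continuous.intervalIntegrable (by continuity) 0 1)
  rw [hI, abs_of_nonneg (by positivity)] at hmain
  simpa [Real.norm_eq_abs] using hmain

/-- Abstract real-number form of the speed-gap estimate. -/
lemma speed_gap_alg (A B c S M η n0 n1 D0 D1 : ℝ)
    (hA : 0 < A) (hB : 0 < B) (hη : 0 < η) (hn0 : 0 < n0) (hn1 : 0 < n1)
    (hCS : c ^ 2 ≤ A ^ 2 * B ^ 2)
    (hMle : M ≤ η * (min (A ^ 2) (B ^ 2) + c)) (hM0 : 0 ≤ M)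
    (hd0 : D0 ≥ η * (A ^ 2 + c) - M) (hd1 : D1 ≤ η * (B ^ 2 + c) + M) :
    D0 / n0 - D1 / n1 ≥
      η * B ^ 2 / n0 * ((A / B - n0 / n1 * (c / (A * B))) ^ 2 - (n0 / n1 + 1) ^ 2) := by
  have hminA : min (A ^ 2) (B ^ 2) ≤ A ^ 2 := min_le_left _ _
  have hminB : min (A ^ 2) (B ^ 2) ≤ B ^ 2 := min_le_right _ _
  have hstep0 : (η * (A ^ 2 + c) - M) / n0 ≥ η * (A ^ 2 - B ^ 2) / n0 := by
    gcongr
    nlinarith [hMle, hminB, hη]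
  have hstep1 : (η * (B ^ 2 + c) + M) / n1 ≤ 2 * η * (B ^ 2 + c) / n1 := by
    have hBc : 0 ≤ B ^ 2 + c := by nlinarith [hMle, hminB, hη, hM0]
    gcongr
    nlinarith [hMle, hminB, hη]
  have hd0' : D0 / n0 ≥ (η * (A ^ 2 + c) - M) / n0 := by gcongr
  have hd1' : D1 / n1 ≤ (η * (B ^ 2 + c) + M) / n1 := by gcongr
  have hident : η * (A ^ 2 - B ^ 2) / n0 - 2 * η * (B ^ 2 + c) / n1 =
      η * B ^ 2 / n0 *
        ((A / B - n0 / n1 * (c / (A * B))) ^ 2 - (n0 / n1 + 1) ^ 2) +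
      η * n0 * (A ^ 2 * B ^ 2 - c ^ 2) / (n1 ^ 2 * A ^ 2) := by
    field_simp
    ring
  have hextra : 0 ≤ η * n0 * (A ^ 2 * B ^ 2 - c ^ 2) / (n1 ^ 2 * A ^ 2) := by
    apply div_nonneg
    · exact mul_nonneg (mul_pos hη hn0).le (by linarith)
    · positivity
  have : η * (A ^ 2 - B ^ 2) / n0 - 2 * η * (B ^ 2 + c) / n1 ≥
      η * B ^ 2 / n0 * ((A / B - n0 / n1 * (c / (A * B))) ^ 2 - (n0 / n1 + 1) ^ 2) := by
    rw [hident]; linarith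
  linarith

/-- The paper's lower bound (Eq. (19)) on the speed gap
`Δ = (f⁰(ω) - f⁰(ω'))/n₀ - (f¹(ω) - f¹(ω'))/n₁` under one gradient-descent step:
`Δ ≥ (η∇₁²/n₀)((r - R·cos θ)² - (R + 1)²)`. -/
theorem speed_gap_lower_bound {E : Type*} [NormedAddCommGroup E]
    [InnerProductSpace ℝ E] [CompleteSpace E]
    (f0 f1 : E → ℝ) (hf0 : Differentiable ℝ f0) (hf1 : Differentiable ℝ f1)
    (L : ℝ) (hL : 0 ≤ L)
    (h0 : ∀ x y : E, ‖gradient f0 x - gradient f0 y‖ ≤ L * ‖x - y‖)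
    (h1 : ∀ x y : E, ‖gradient f1 x - gradient f1 y‖ ≤ L * ‖x - y‖)
    (ω : E)
    (hg0 : 0 < ‖gradient f0 ω‖) (hg1 : 0 < ‖gradient f1 ω‖)
    (hS : 0 < ‖gradient f0 ω + gradient f1 ω‖ ^ 2)
    (η : ℝ) (hη : 0 < η)
    (hηL : η * L ≤
      2 * (min (‖gradient f0 ω‖ ^ 2) (‖gradient f1 ω‖ ^ 2) +
          ⟪gradient f0 ω, gradient f1 ω⟫) /
        ‖gradient f0 ω + gradient f1 ω‖ ^ 2)
    (n0 n1 : ℝ) (hn0 : 0 < n0) (hn1 : 0 < n1)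
    (ω' : E) (hω' : ω' = ω - η • (gradient f0 ω + gradient f1 ω)) :
    (f0 ω - f0 ω') / n0 - (f1 ω - f1 ω') / n1 ≥
      η * ‖gradient f1 ω‖ ^ 2 / n0 *
        ((‖gradient f0 ω‖ / ‖gradient f1 ω‖ -
            n0 / n1 *
              (⟪gradient f0 ω, gradient f1 ω⟫ /
                (‖gradient f0 ω‖ * ‖gradient f1 ω‖))) ^ 2 -
          (n0 / n1 + 1) ^ 2) := by
  have hω'' : ω' = ω + (-η) • (gradient f0 ω + gradient f1 ω) := by
    rw [hω', sub_eq_add_neg, ← neg_smul]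
  have d0 := descent_lemma f0 hf0 L hL h0 ω ((-η) • (gradient f0 ω + gradient f1 ω))
  have d1 := descent_lemma f1 hf1 L hL h1 ω ((-η) • (gradient f0 ω + gradient f1 ω))
  rw [← hω''] at d0 d1
  have hnsm : ‖(-η) • (gradient f0 ω + gradient f1 ω)‖ ^ 2 =
      η ^ 2 * ‖gradient f0 ω + gradient f1 ω‖ ^ 2 := by
    rw [norm_smul, Real.norm_eq_abs, abs_neg, abs_of_pos hη, mul_pow]
  have hin0 : ⟪gradient f0 ω, ((-η) • (gradient f0 ω + gradient f1 ω) : E)⟫ =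
      -η * (‖gradient f0 ω‖ ^ 2 + ⟪gradient f0 ω, gradient f1 ω⟫) := by
    rw [real_inner_smul_right, inner_add_right, real_inner_self_eq_norm_sq]
  have hin1 : ⟪gradient f1 ω, ((-η) • (gradient f0 ω + gradient f1 ω) : E)⟫ =
      -η * (‖gradient f1 ω‖ ^ 2 + ⟪gradient f0 ω, gradient f1 ω⟫) := by
    rw [real_inner_smul_right, inner_add_right, real_inner_self_eq_norm_sq,
      real_inner_comm]
    ring
  rw [hin0, hnsm] at d0
  rw [hin1, hnsm] at d1
  have habs0 := (abs_le.1 d0).2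
  have habs1 := (abs_le.1 d1).1
  have h1' : η * L * ‖gradient f0 ω + gradient f1 ω‖ ^ 2 ≤
      2 * (min (‖gradient f0 ω‖ ^ 2) (‖gradient f1 ω‖ ^ 2) +
        ⟪gradient f0 ω, gradient f1 ω⟫) := by
    have := mul_le_mul_of_nonneg_right hηL hS.le
    rwa [div_mul_cancel₀ _ (ne_of_gt hS)] at this
  have hCS : ⟪gradient f0 ω, gradient f1 ω⟫ ^ 2 ≤
      ‖gradient f0 ω‖ ^ 2 * ‖gradient f1 ω‖ ^ 2 := by
    have h := abs_real_inner_le_norm (gradient f0 ω) (gradient f1 ω)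
    nlinarith [abs_nonneg ⟪gradient f0 ω, gradient f1 ω⟫,
      sq_abs ⟪gradient f0 ω, gradient f1 ω⟫]
  apply speed_gap_alg (‖gradient f0 ω‖) (‖gradient f1 ω‖)
    (⟪gradient f0 ω, gradient f1 ω⟫) (‖gradient f0 ω + gradient f1 ω‖ ^ 2)
    (L / 2 * (η ^ 2 * ‖gradient f0 ω + gradient f1 ω‖ ^ 2)) η n0 n1 _ _
    hg0 hg1 hη hn0 hn1 hCS
  · nlinarith [mul_le_mul_of_nonneg_left h1' hη.le]
  · positivity
  · linarith [habs0]
  · linarith [habs1]
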